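/- Let (Ω,d) be a Hadamard space and X a Borel random variable in Ω with E[d(X,z)] < ∞ for some z ∈ Ω. Then for each z ∈ Ω the function ω ↦ E[d(X,ω)^2 − d(X,z)^2] is well defined (the integrand is integrable for every ω), continuous and uniformly convex, and it has a unique minimizer in Ω; moreover this minimizer does not depend on the choice of z. Consequently every L^1 random variable in a Hadamard space has a well-defined unique Fréchet mean. -/

import Mathlib

open MeasureTheory Metric

/-- The Non-Positive Curvature (NPC) midpoint inequality characterizing Hadamard spaces. -/
def NPCSpace (Ω : Type*) [MetricSpace Ω] : Prop :=
  ∀ x y : Ω, ∃ m : Ω, ∀ z : Ω,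
    dist z m ^ 2 ≤ (1/2 : ℝ) * dist z x ^ 2 + (1/2 : ℝ) * dist z y ^ 2
      - (1/4 : ℝ) * dist x y ^ 2

/-- `γ : [0,1] → Ω` is a geodesic from `x` to `y`. -/
def IsGeodesicFrom {Ω : Type*} [MetricSpace Ω] (x y : Ω) (γ : ℝ → Ω) : Prop :=
  γ 0 = x ∧ γ 1 = y ∧
    ∀ s ∈ Set.Icc (0:ℝ) 1, ∀ t ∈ Set.Icc (0:ℝ) 1,
      dist (γ s) (γ t) = |s - t| * dist x y

lemma geodesic_midpoint_ineq {Ω : Type*} [MetricSpace Ω] (hNPC : NPCSpace Ω)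
    {x y : Ω} {γ : ℝ → Ω} (hγ : IsGeodesicFrom x y γ) {s t : ℝ}
    (hs : s ∈ Set.Icc (0:ℝ) 1) (ht : t ∈ Set.Icc (0:ℝ) 1) (z : Ω) :
    dist z (γ ((s+t)/2)) ^ 2 ≤ (1/2) * dist z (γ s) ^ 2 + (1/2) * dist z (γ t) ^ 2
      - (1/4) * ((t-s) * dist x y) ^ 2 := by
  obtain ⟨m, hm⟩ := hNPC (γ s) (γ t)
  have hu : (s+t)/2 ∈ Set.Icc (0:ℝ) 1 := by
    constructor <;> [nlinarith [hs.1, ht.1]; nlinarith [hs.2, ht.2]]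
  have hst : dist (γ s) (γ t) = |s - t| * dist x y := hγ.2.2 s hs t ht
  have h1 := hm (γ ((s+t)/2))
  have h2 : dist (γ ((s+t)/2)) (γ s) = |(s+t)/2 - s| * dist x y := hγ.2.2 _ hu s hs
  have h3 : dist (γ ((s+t)/2)) (γ t) = |(s+t)/2 - t| * dist x y := hγ.2.2 _ hu t ht
  have heq : γ ((s+t)/2) = m := by
    have : dist (γ ((s+t)/2)) m ^ 2 ≤ 0 := by
      rw [h2, h3, hst] at h1
      have e1 : |(s+t)/2 - s| = |s - t| / 2 := by rw [abs_sub_comm s t]; rw [show (s+t)/2 - s = (t-s)/2 by ring, abs_div]; simp [abs_of_nonneg]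
      have e2 : |(s+t)/2 - t| = |s - t| / 2 := by rw [show (s+t)/2 - t = (s-t)/2 by ring, abs_div]; simp [abs_of_nonneg]
      rw [e1, e2] at h1
      nlinarith [sq_abs (s - t), sq_nonneg (dist x y)]
    have := sq_nonneg (dist (γ ((s+t)/2)) m)
    have hd : dist (γ ((s+t)/2)) m = 0 := by nlinarith
    exact dist_eq_zero.mp hd
  have h4 := hm z
  rw [← heq, hst] at h4
  calc dist z (γ ((s+t)/2)) ^ 2 ≤ (1/2) * dist z (γ s) ^ 2 + (1/2) * dist z (γ t) ^ 2
      - (1/4) * (|s - t| * dist x y) ^ 2 := h4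
    _ = (1/2) * dist z (γ s) ^ 2 + (1/2) * dist z (γ t) ^ 2
      - (1/4) * ((t-s) * dist x y) ^ 2 := by rw [mul_pow, mul_pow, sq_abs]; ring_nf

section Aux
variable {Ω : Type*} [MetricSpace Ω]

lemma npc_convex_along_geodesic (hNPC : NPCSpace Ω)
    {x y : Ω} {γ : ℝ → Ω} (hγ : IsGeodesicFrom x y γ) (z : Ω) {t : ℝ}
    (ht : t ∈ Set.Icc (0:ℝ) 1) :
    dist z (γ t) ^ 2 ≤ (1-t) * dist z x ^ 2 + t * dist z y ^ 2
      - t * (1-t) * dist x y ^ 2 := by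
  set a := dist z x ^ 2 with ha
  set b := dist z y ^ 2 with hb
  set D := dist x y with hD
  obtain ⟨g, hg⟩ : ∃ g : ℝ → ℝ, g = fun r => dist z (γ r) ^ 2 - ((1-r) * a + r * b - r * (1-r) * D ^ 2) := ⟨_, rfl⟩
  -- continuity of g on Icc 0 1
  have hγcont : ContinuousOn (fun r => dist z (γ r)) (Set.Icc (0:ℝ) 1) := by
    have : LipschitzOnWith (Real.toNNReal D) (fun r => dist z (γ r)) (Set.Icc (0:ℝ) 1) := by
      rw [lipschitzOnWith_iff_dist_le_mul]
      intro s hs t ht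
      have := hγ.2.2 s hs t ht
      rw [Real.dist_eq, Real.dist_eq]
      calc |dist z (γ s) - dist z (γ t)| ≤ dist (γ s) (γ t) := by
              rw [dist_comm z (γ s), dist_comm z (γ t)]; exact abs_dist_sub_le _ _ _
        _ = |s - t| * D := this
        _ ≤ (Real.toNNReal D) * |s - t| := by
              rw [Real.coe_toNNReal D dist_nonneg]; ring_nf; exact le_refl _
    exact this.continuousOn
  have hgcont : ContinuousOn g (Set.Icc (0:ℝ) 1) := by
    rw [hg]
    apply ContinuousOn.sub
    · exact (hγcont.pow 2)
    · fun_prop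
  obtain ⟨t₀, ht₀, hmax⟩ := isCompact_Icc.exists_isMaxOn (Set.nonempty_Icc.mpr zero_le_one) hgcont
  -- the midpoint subconvexity of g
  have hgmid : ∀ s ∈ Set.Icc (0:ℝ) 1, ∀ r ∈ Set.Icc (0:ℝ) 1,
      g ((s + r)/2) ≤ (1/2) * g s + (1/2) * g r := by
    intro s hs r hr
    have h1 := geodesic_midpoint_ineq hNPC hγ hs hr z
    simp only [hg]
    nlinarith [h1]
  -- g 0 = 0, g 1 = 0
  have hg0 : g 0 = 0 := by simp [hg, hγ.1, ha]
  have hg1 : g 1 = 0 := by simp [hg, hγ.2.1, hb]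
  -- max value is ≤ 0
  have hS : g t₀ ≤ 0 := by
    rcases le_total t₀ (1/2 : ℝ) with hc | hc
    · have h2t : (2*t₀ : ℝ) ∈ Set.Icc (0:ℝ) 1 := ⟨by linarith [ht₀.1], by linarith⟩
      have h0 : (0:ℝ) ∈ Set.Icc (0:ℝ) 1 := ⟨le_refl _, zero_le_one⟩
      have hmid := hgmid 0 h0 (2*t₀) h2t
      rw [show ((0:ℝ) + 2*t₀)/2 = t₀ by ring, hg0] at hmid
      have h2 : g (2*t₀) ≤ g t₀ := hmax h2t
      linarith
    · have h2t : (2*t₀ - 1 : ℝ) ∈ Set.Icc (0:ℝ) 1 := ⟨by linarith, by linarith [ht₀.2]⟩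
      have h1m : (1:ℝ) ∈ Set.Icc (0:ℝ) 1 := ⟨zero_le_one, le_refl _⟩
      have hmid := hgmid (2*t₀ - 1) h2t 1 h1m
      rw [show ((2*t₀ - 1 : ℝ) + 1)/2 = t₀ by ring, hg1] at hmid
      have h2 : g (2*t₀ - 1) ≤ g t₀ := hmax h2t
      linarith
  have := le_trans (hmax ht) hS
  simp only [hg] at this
  linarith
end Aux

/-- in a Hadamard space, for an `L¹` Borel random variable `X`, for each
`z` the function `ω ↦ E[d(X,ω)² − d(X,z)²]` is well defined (the integrand is integrable),
continuous, uniformly convex (along geodesics, with a positive modulus), and has a unique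
minimizer which does not depend on `z`; hence every `L¹` random variable in a Hadamard
space has a well-defined unique Fréchet mean. -/
theorem l1_frechet_mean_exists_unique
    {Ω : Type*} [MetricSpace Ω] [CompleteSpace Ω] (hNPC : NPCSpace Ω)
    [MeasurableSpace Ω] [BorelSpace Ω]
    {A : Type*} [MeasurableSpace A] (P : Measure A) [IsProbabilityMeasure P]
    (X : A → Ω) (hX : Measurable X)
    (hL1 : ∃ z : Ω, Integrable (fun a => dist (X a) z) P) :
    (∀ z ω : Ω, Integrable (fun a => dist (X a) ω ^ 2 - dist (X a) z ^ 2) P) ∧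
    (∀ z : Ω, Continuous fun ω : Ω => ∫ a, (dist (X a) ω ^ 2 - dist (X a) z ^ 2) ∂P) ∧
    (∃ c > (0:ℝ), ∀ (z x y : Ω) (γ : ℝ → Ω), IsGeodesicFrom x y γ →
      ∀ t ∈ Set.Icc (0:ℝ) 1,
        ∫ a, (dist (X a) (γ t) ^ 2 - dist (X a) z ^ 2) ∂P ≤
          (1 - t) * ∫ a, (dist (X a) x ^ 2 - dist (X a) z ^ 2) ∂P +
          t * ∫ a, (dist (X a) y ^ 2 - dist (X a) z ^ 2) ∂P -
          c * t * (1 - t) * dist x y ^ 2) ∧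
    (∃ m : Ω, ∀ z : Ω,
      (∀ ω : Ω, ∫ a, (dist (X a) m ^ 2 - dist (X a) z ^ 2) ∂P ≤
        ∫ a, (dist (X a) ω ^ 2 - dist (X a) z ^ 2) ∂P) ∧
      (∀ m' : Ω, (∀ ω : Ω, ∫ a, (dist (X a) m' ^ 2 - dist (X a) z ^ 2) ∂P ≤
        ∫ a, (dist (X a) ω ^ 2 - dist (X a) z ^ 2) ∂P) → m' = m)) := by
  obtain ⟨z₀, hz₀⟩ := hL1
  have hmeas : ∀ w : Ω, Measurable fun a => dist (X a) w := fun w => (continuous_id.dist continuous_const).measurable.comp hX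
  -- every distance function is integrable
  have hint1 : ∀ w : Ω, Integrable (fun a => dist (X a) w) P := by
    intro w
    refine (hz₀.add (integrable_const (dist z₀ w))).mono' (hmeas w).aestronglyMeasurable ?_
    filter_upwards with a
    rw [Real.norm_eq_abs, abs_of_nonneg dist_nonneg]
    exact dist_triangle _ _ _
  -- part 1 : integrability
  have hint : ∀ z ω : Ω, Integrable (fun a => dist (X a) ω ^ 2 - dist (X a) z ^ 2) P := by
    intro z ω
    refine (((hint1 ω).add (hint1 z)).const_mul (dist ω z)).mono'
      (((hmeas ω).pow_const 2).sub ((hmeas z).pow_const 2)).aestronglyMeasurable ?_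
    filter_upwards with a
    simp only [Pi.add_apply]
    rw [Real.norm_eq_abs]
    have h1 : |dist (X a) ω - dist (X a) z| ≤ dist ω z := by
      rw [dist_comm (X a) ω, dist_comm (X a) z]; exact abs_dist_sub_le _ _ _
    have h2 := abs_le.mp h1
    have hp : (0:ℝ) ≤ dist (X a) ω := dist_nonneg
    have hq : (0:ℝ) ≤ dist (X a) z := dist_nonneg
    rw [abs_le]; constructor <;> nlinarith
  -- difference of the objective at two points does not depend on z
  have hdiff : ∀ z ω ω' : Ω,
      (∫ a, (dist (X a) ω ^ 2 - dist (X a) z ^ 2) ∂P)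
        - (∫ a, (dist (X a) ω' ^ 2 - dist (X a) z ^ 2) ∂P)
      = ∫ a, (dist (X a) ω ^ 2 - dist (X a) ω' ^ 2) ∂P := by
    intro z ω ω'
    rw [← integral_sub (hint z ω) (hint z ω')]
    congr 1; funext a; ring
  -- part 2 : continuity
  have hcont : ∀ z : Ω, Continuous fun ω : Ω =>
      ∫ a, (dist (X a) ω ^ 2 - dist (X a) z ^ 2) ∂P := by
    intro z
    rw [continuous_iff_continuousAt]
    intro ω₀
    have hK : (0:ℝ) ≤ ∫ a, dist (X a) ω₀ ∂P :=
      integral_nonneg fun a => dist_nonneg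
    set K : ℝ := ∫ a, dist (X a) ω₀ ∂P with hKdef
    have key : ∀ ω : Ω,
        |(∫ a, (dist (X a) ω ^ 2 - dist (X a) z ^ 2) ∂P)
          - (∫ a, (dist (X a) ω₀ ^ 2 - dist (X a) z ^ 2) ∂P)|
        ≤ dist ω ω₀ * (2 * K + dist ω ω₀) := by
      intro ω
      rw [hdiff z ω ω₀]
      have step1 : |∫ a, (dist (X a) ω ^ 2 - dist (X a) ω₀ ^ 2) ∂P|
          ≤ ∫ a, |dist (X a) ω ^ 2 - dist (X a) ω₀ ^ 2| ∂P := by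
        simpa [Real.norm_eq_abs] using
          norm_integral_le_integral_norm (fun a => dist (X a) ω ^ 2 - dist (X a) ω₀ ^ 2) (μ := P)
      have step2 : (∫ a, |dist (X a) ω ^ 2 - dist (X a) ω₀ ^ 2| ∂P)
          ≤ ∫ a, dist ω ω₀ * (dist (X a) ω + dist (X a) ω₀) ∂P := by
        refine integral_mono (hint ω₀ ω).abs (((hint1 ω).add (hint1 ω₀)).const_mul _) ?_
        intro a
        simp only [Pi.add_apply]
        have h1 : |dist (X a) ω - dist (X a) ω₀| ≤ dist ω ω₀ := by
          rw [dist_comm (X a) ω, dist_comm (X a) ω₀]; exact abs_dist_sub_le _ _ _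
        have h2 := abs_le.mp h1
        have hp : (0:ℝ) ≤ dist (X a) ω := dist_nonneg
        have hq : (0:ℝ) ≤ dist (X a) ω₀ := dist_nonneg
        rw [abs_le]; constructor <;> nlinarith
      have step3 : (∫ a, dist ω ω₀ * (dist (X a) ω + dist (X a) ω₀) ∂P)
          = dist ω ω₀ * ((∫ a, dist (X a) ω ∂P) + K) := by
        rw [integral_const_mul, integral_add (hint1 ω) (hint1 ω₀)]
      have step4 : (∫ a, dist (X a) ω ∂P) ≤ K + dist ω₀ ω := by
        have := integral_mono (hint1 ω) ((hint1 ω₀).add (integrable_const (dist ω₀ ω)))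
          (fun a => dist_triangle (X a) ω₀ ω)
        simpa [integral_add (hint1 ω₀) (integrable_const (dist ω₀ ω))] using this
      rw [dist_comm ω₀ ω] at step4
      have hd : (0:ℝ) ≤ dist ω ω₀ := dist_nonneg
      calc |∫ a, (dist (X a) ω ^ 2 - dist (X a) ω₀ ^ 2) ∂P|
          ≤ ∫ a, dist ω ω₀ * (dist (X a) ω + dist (X a) ω₀) ∂P := le_trans step1 step2
        _ = dist ω ω₀ * ((∫ a, dist (X a) ω ∂P) + K) := step3
        _ ≤ dist ω ω₀ * (2 * K + dist ω ω₀) := by nlinarith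
    rw [Metric.continuousAt_iff]
    intro ε hε
    refine ⟨min 1 (ε / (2 * K + 2)), lt_min one_pos (by positivity), fun {ω} hω => ?_⟩
    have hd : (0:ℝ) ≤ dist ω ω₀ := dist_nonneg
    have h1 : dist ω ω₀ < 1 := lt_of_lt_of_le hω (min_le_left _ _)
    have h2 : dist ω ω₀ < ε / (2 * K + 2) := lt_of_lt_of_le hω (min_le_right _ _)
    have h3 : ε / (2 * K + 2) * (2 * K + 2) = ε := by field_simp
    rw [Real.dist_eq]
    calc |(∫ a, (dist (X a) ω ^ 2 - dist (X a) z ^ 2) ∂P)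
          - (∫ a, (dist (X a) ω₀ ^ 2 - dist (X a) z ^ 2) ∂P)|
        ≤ dist ω ω₀ * (2 * K + dist ω ω₀) := key ω
      _ < ε := by nlinarith
  refine ⟨hint, hcont, ?_, ?_⟩
  -- part 3 : uniform convexity with c = 1
  · refine ⟨1, one_pos, fun z x y γ hγ t ht => ?_⟩
    have hpt : ∀ a, dist (X a) (γ t) ^ 2 - dist (X a) z ^ 2
        ≤ (1 - t) * (dist (X a) x ^ 2 - dist (X a) z ^ 2)
          + t * (dist (X a) y ^ 2 - dist (X a) z ^ 2)
          - t * (1 - t) * dist x y ^ 2 := by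
      intro a
      have := npc_convex_along_geodesic hNPC hγ (X a) ht
      nlinarith [this]
    have hIntR : Integrable (fun a =>
        (1 - t) * (dist (X a) x ^ 2 - dist (X a) z ^ 2)
          + t * (dist (X a) y ^ 2 - dist (X a) z ^ 2)
          - t * (1 - t) * dist x y ^ 2) P :=
      (((hint z x).const_mul (1 - t)).add ((hint z y).const_mul t)).sub
        (integrable_const _)
    have hAdd : Integrable (fun a =>
        (1 - t) * (dist (X a) x ^ 2 - dist (X a) z ^ 2)
          + t * (dist (X a) y ^ 2 - dist (X a) z ^ 2)) P :=
      ((hint z x).const_mul _).add ((hint z y).const_mul _)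
    have := integral_mono (hint z (γ t)) hIntR hpt
    rw [integral_sub hAdd (integrable_const _),
      integral_add ((hint z x).const_mul (1 - t)) ((hint z y).const_mul t),
      integral_const_mul, integral_const_mul, integral_const] at this
    simp only [measure_univ, probReal_univ, ENNReal.toReal_one, smul_eq_mul, one_mul] at this
    calc ∫ a, (dist (X a) (γ t) ^ 2 - dist (X a) z ^ 2) ∂P
        ≤ (1 - t) * (∫ a, (dist (X a) x ^ 2 - dist (X a) z ^ 2) ∂P)
          + t * (∫ a, (dist (X a) y ^ 2 - dist (X a) z ^ 2) ∂P)
          - t * (1 - t) * dist x y ^ 2 := this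
      _ = (1 - t) * (∫ a, (dist (X a) x ^ 2 - dist (X a) z ^ 2) ∂P)
          + t * (∫ a, (dist (X a) y ^ 2 - dist (X a) z ^ 2) ∂P)
          - 1 * t * (1 - t) * dist x y ^ 2 := by ring
  -- part 4 : existence and uniqueness of the minimizer
  · -- integrated midpoint inequality
    have hFmid : ∀ z u v : Ω, ∃ m : Ω,
        (∫ a, (dist (X a) m ^ 2 - dist (X a) z ^ 2) ∂P)
          ≤ (1/2) * (∫ a, (dist (X a) u ^ 2 - dist (X a) z ^ 2) ∂P)
            + (1/2) * (∫ a, (dist (X a) v ^ 2 - dist (X a) z ^ 2) ∂P)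
            - (1/4) * dist u v ^ 2 := by
      intro z u v
      obtain ⟨m, hm⟩ := hNPC u v
      refine ⟨m, ?_⟩
      have hIntR : Integrable (fun a =>
          (1/2) * (dist (X a) u ^ 2 - dist (X a) z ^ 2)
            + (1/2) * (dist (X a) v ^ 2 - dist (X a) z ^ 2)
            - (1/4) * dist u v ^ 2) P :=
        (((hint z u).const_mul _).add ((hint z v).const_mul _)).sub (integrable_const _)
      have hAdd : Integrable (fun a =>
          (1/2) * (dist (X a) u ^ 2 - dist (X a) z ^ 2)
            + (1/2) * (dist (X a) v ^ 2 - dist (X a) z ^ 2)) P :=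
        ((hint z u).const_mul _).add ((hint z v).const_mul _)
      have := integral_mono (hint z m) hIntR (fun a => by have := hm (X a); dsimp only; linarith)
      rw [integral_sub hAdd (integrable_const _),
        integral_add ((hint z u).const_mul _) ((hint z v).const_mul _),
        integral_const_mul, integral_const_mul, integral_const] at this
      simpa [measure_univ] using this
    obtain ⟨F, hF⟩ : ∃ F : Ω → ℝ,
        F = fun ω => ∫ a, (dist (X a) ω ^ 2 - dist (X a) z₀ ^ 2) ∂P := ⟨_, rfl⟩
    have hFmid2 : ∀ u v : Ω, ∃ m : Ω,
        F m ≤ (1/2) * F u + (1/2) * F v - (1/4) * dist u v ^ 2 := by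
      intro u v
      simp only [hF]
      exact hFmid z₀ u v
    -- lower bound
    have hFlb : ∀ ω : Ω, -(∫ a, dist (X a) z₀ ∂P) ^ 2 ≤ F ω := by
      intro ω
      have hpt : ∀ a, dist z₀ ω ^ 2 - (2 * dist z₀ ω) * dist (X a) z₀
          ≤ dist (X a) ω ^ 2 - dist (X a) z₀ ^ 2 := by
        intro a
        have h1 : |dist z₀ ω - dist (X a) z₀| ≤ dist (X a) ω := by
          rw [dist_comm z₀ ω, dist_comm (X a) ω]
          exact abs_dist_sub_le ω (X a) z₀
        have h2 := abs_le.mp h1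
        have hp : (0:ℝ) ≤ dist (X a) ω := dist_nonneg
        nlinarith
      have hIntL : Integrable (fun a =>
          dist z₀ ω ^ 2 - (2 * dist z₀ ω) * dist (X a) z₀) P :=
        (integrable_const _).sub ((hint1 z₀).const_mul _)
      have := integral_mono hIntL (hint z₀ ω) hpt
      rw [integral_sub (integrable_const _) ((hint1 z₀).const_mul _),
        integral_const_mul, integral_const] at this
      simp only [measure_univ, probReal_univ, ENNReal.toReal_one, smul_eq_mul, one_mul] at this
      rw [hF]
      nlinarith [this, sq_nonneg (dist z₀ ω - ∫ a, dist (X a) z₀ ∂P)]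
    have hne : (Set.range F).Nonempty := ⟨F z₀, z₀, rfl⟩
    have hbdd : BddBelow (Set.range F) := by
      refine ⟨-(∫ a, dist (X a) z₀ ∂P) ^ 2, ?_⟩
      rintro _ ⟨ω, rfl⟩
      exact hFlb ω
    obtain ⟨I, hI⟩ : ∃ I : ℝ, I = sInf (Set.range F) := ⟨_, rfl⟩
    have hI_le : ∀ ω : Ω, I ≤ F ω := fun ω => hI ▸ csInf_le hbdd ⟨ω, rfl⟩
    have hseq : ∀ n : ℕ, ∃ ω : Ω, F ω < I + 1 / (n + 1) := by
      intro n
      have hlt : sInf (Set.range F) < I + 1 / (n + 1) := by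
        rw [← hI]
        have : (0:ℝ) < 1 / (n + 1) := by positivity
        linarith
      obtain ⟨_, ⟨ω, rfl⟩, hω⟩ := exists_lt_of_csInf_lt hne hlt
      exact ⟨ω, hω⟩
    choose u hu using hseq
    have hkey : ∀ n N : ℕ,
        dist (u n) (u N) ^ 2 ≤ 2 * (1 / (n + 1) + 1 / (N + 1)) := by
      intro n N
      obtain ⟨p, hp⟩ := hFmid2 (u n) (u N)
      have h1 := hI_le p
      have h2 := hu n
      have h3 := hu N
      nlinarith [h1, h2, h3, hp]
    have hcauchy : CauchySeq u := by
      rw [Metric.cauchySeq_iff']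
      intro ε hε
      obtain ⟨N, hN⟩ := exists_nat_gt (4 / ε ^ 2)
      refine ⟨N, fun n hn => ?_⟩
      have hNpos : (0:ℝ) < (N:ℝ) + 1 := by positivity
      have h4 : 4 / ((N:ℝ) + 1) < ε ^ 2 := by
        rw [div_lt_iff₀ hNpos]
        have hε2 : (0:ℝ) < ε ^ 2 := by positivity
        rw [div_lt_iff₀ hε2] at hN
        nlinarith
      have hmono : (1:ℝ) / (n + 1) ≤ 1 / (N + 1) := by
        apply one_div_le_one_div_of_le hNpos
        have : (N:ℝ) ≤ n := Nat.cast_le.mpr hn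
        linarith
      have := hkey n N
      have hd2 : dist (u n) (u N) ^ 2 < ε ^ 2 := by
        calc dist (u n) (u N) ^ 2 ≤ 2 * (1 / (n + 1) + 1 / (N + 1)) := this
          _ ≤ 4 / ((N:ℝ) + 1) := by
              rw [div_eq_mul_one_div 4]
              linarith
          _ < ε ^ 2 := h4
      exact lt_of_pow_lt_pow_left₀ 2 hε.le hd2
    obtain ⟨m, hmten⟩ := cauchySeq_tendsto_of_complete hcauchy
    have hFc : Continuous F := by rw [hF]; exact hcont z₀
    have hFu : Filter.Tendsto (fun n => F (u n)) Filter.atTop (nhds (F m)) :=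
      (hFc.tendsto m).comp hmten
    have hFuI : Filter.Tendsto (fun n => F (u n)) Filter.atTop (nhds I) := by
      refine tendsto_of_tendsto_of_tendsto_of_le_of_le tendsto_const_nhds ?_
        (fun n => hI_le (u n)) (fun n => (hu n).le)
      have := tendsto_const_nhds (x := I) (f := Filter.atTop (α := ℕ))
        |>.add tendsto_one_div_add_atTop_nhds_zero_nat
      simpa using this
    have hFmI : F m = I := tendsto_nhds_unique hFu hFuI
    have hmin : ∀ ω : Ω, F m ≤ F ω := by
      rw [hFmI]; exact hI_le
    have huniq : ∀ m' : Ω, (∀ ω : Ω, F m' ≤ F ω) → m' = m := by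
      intro m' hm'
      obtain ⟨p, hp⟩ := hFmid2 m m'
      have h1 := hmin p
      have h2 := hm' m
      have h3 := hmin m'
      have hdd : dist m m' = 0 := by
        nlinarith [dist_nonneg (x := m) (y := m'), hp, h1, h2, h3]
      exact (dist_eq_zero.mp hdd).symm
    refine ⟨m, fun z => ⟨?_, ?_⟩⟩
    · intro ω
      have h := hmin ω
      simp only [hF] at h
      have e1 := hdiff z m ω
      have e2 := hdiff z₀ m ω
      linarith
    · intro m' hm'z
      apply huniq m'
      intro ω
      have h := hm'z ω
      have e1 := hdiff z m' ω
      have e2 := hdiff z₀ m' ω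
      simp only [hF]
      linarith
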